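/- Let (X,T) be a minimal weakly mixing topological dynamical system and let d ≥ 1 be an integer. Then for every x ∈ X, the closure of the F^{[d]}-orbit of the diagonal point x^{[d]} equals {x} × X_*^{[d]} (the set of all points of X^{[d]} whose coordinate at ε = (0,…,0) equals x), and this set is a minimal closed invariant set for the action of the face group F^{[d]}. -/

import Mathlib

open Set

/-- The group of self-homeomorphisms of a topological space,
with `(f * g) x = f (g x)`. -/
instance homeomorphGroup {X : Type*} [TopologicalSpace X] : Group (X ≃ₜ X) where
  mul f g := g.trans f
  one := Homeomorph.refl X
  inv := Homeomorph.symm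
  mul_assoc f g h := rfl
  one_mul f := by ext x; rfl
  mul_one f := by ext x; rfl
  inv_mul_cancel f := by ext x; exact f.symm_apply_apply x

/-- `n · ε = n₁ε₁ + ⋯ + n_dε_d`. -/
def nDot {d : ℕ} (n : Fin d → ℤ) (ε : Fin d → Bool) : ℤ :=
  ∑ i, if ε i then n i else 0

/-- The vertex `(0,…,0)` of the cube `{0,1}^d`. -/
def v0 (d : ℕ) : Fin d → Bool := fun _ => false

/-- A topological dynamical system `(X,T)` is minimal if every orbit is dense. -/
def IsMinimalTDS {X : Type*} [TopologicalSpace X] (T : X ≃ₜ X) : Prop :=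
  ∀ x : X, Dense (Set.range fun n : ℤ => (T ^ n) x)

/-- The dynamical parallelepiped `Q^{[d]}(X)`: the closure in `X^{[d]} = X^({0,1}^d)`
of the set of points `(T^{n·ε} x)_{ε ∈ {0,1}^d}`, `x ∈ X`, `n ∈ ℤ^d`. -/
def cubeQ {X : Type*} [TopologicalSpace X] (T : X ≃ₜ X) (d : ℕ) :
    Set ((Fin d → Bool) → X) :=
  closure {y | ∃ (x : X) (n : Fin d → ℤ), y = fun ε => (T ^ nDot n ε) x}

/-- The regionally proximal relation of order `k` (for `k = 0` this is all of `X × X`). -/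
def RP {X : Type*} [MetricSpace X] (T : X ≃ₜ X) (k : ℕ) : Set (X × X) :=
  {p | ∀ δ > 0, ∃ (x' y' : X) (n : Fin k → ℤ),
    dist p.1 x' < δ ∧ dist p.2 y' < δ ∧
    ∀ ε : Fin k → Bool, ε ≠ v0 k →
      dist ((T ^ nDot n ε) x') ((T ^ nDot n ε) y') < δ}

/-- A factor map between topological dynamical systems: a continuous surjection
intertwining the actions. -/
def IsFactorMap {X Z : Type*} [TopologicalSpace X] [TopologicalSpace Z]
    (T : X ≃ₜ X) (S : Z ≃ₜ Z) (π : X → Z) : Prop :=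
  Continuous π ∧ Function.Surjective π ∧ ∀ x, π (T x) = S (π x)

/-- The diagonal homeomorphism `T^{[d]} = T × ⋯ × T` of `X^{[d]}`. -/
def diagHomeo {X : Type*} [TopologicalSpace X] (T : X ≃ₜ X) (d : ℕ) :
    ((Fin d → Bool) → X) ≃ₜ ((Fin d → Bool) → X) :=
  Homeomorph.piCongrRight fun _ : Fin d → Bool => T

/-- `w` is a minimal point of the homeomorphism `S`. -/
def IsMinimalPoint {W : Type*} [TopologicalSpace W] (S : W ≃ₜ W) (w : W) : Prop :=
  ∀ y ∈ closure (Set.range fun n : ℤ => (S ^ n) w),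
    closure (Set.range fun n : ℤ => (S ^ n) y)
      = closure (Set.range fun n : ℤ => (S ^ n) w)

/-- The `j`-th face transformation `T_j^{[d]}` of `X^{[d]}`. -/
def faceHomeo {X : Type*} [TopologicalSpace X] {d : ℕ} (T : X ≃ₜ X) (j : Fin d) :
    ((Fin d → Bool) → X) ≃ₜ ((Fin d → Bool) → X) :=
  Homeomorph.piCongrRight fun ε : Fin d → Bool =>
    if ε j then T else Homeomorph.refl X

/-- The face group `F^{[d]}`: the group of homeomorphisms of `X^{[d]}`
generated by the face transformations. -/
def faceGroup {X : Type*} [TopologicalSpace X] (T : X ≃ₜ X) (d : ℕ) :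
    Subgroup (((Fin d → Bool) → X) ≃ₜ ((Fin d → Bool) → X)) :=
  Subgroup.closure (Set.range (faceHomeo (d := d) T))

/-- The orbit of a point under a group of homeomorphisms. -/
def groupOrbit {W : Type*} [TopologicalSpace W] (G : Subgroup (W ≃ₜ W)) (w : W) : Set W :=
  {y | ∃ g ∈ G, g w = y}

/-- The homeomorphism `id × T_*^{[d]}` of `X^{[d]}`, fixing the `(0,…,0)`-coordinate
and applying `T` to every other coordinate. -/
def idFaceHomeo {X : Type*} [TopologicalSpace X] (T : X ≃ₜ X) (d : ℕ) :
    ((Fin d → Bool) → X) ≃ₜ ((Fin d → Bool) → X) :=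
  Homeomorph.piCongrRight fun ε : Fin d → Bool =>
    if ε = v0 d then Homeomorph.refl X else T

/-- A system `(X,T)` is weakly mixing if `(X × X, T × T)` is topologically transitive. -/
def IsWeaklyMixing {X : Type*} [TopologicalSpace X] (T : X ≃ₜ X) : Prop :=
  ∀ U V : Set (X × X), IsOpen U → IsOpen V → U.Nonempty → V.Nonempty →
    ∃ n : ℤ, (U ∩ (fun p : X × X => ((T ^ n) p.1, (T ^ n) p.2)) ⁻¹' V).Nonempty

section Aux

variable {X : Type*} [MetricSpace X] [CompactSpace X] {d : ℕ}

theorem hmul_apply (f g : X ≃ₜ X) (x : X) : (f * g) x = f (g x) := rfl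

theorem one_apply' (x : X) : (1 : X ≃ₜ X) x = x := rfl

theorem zpow_apply_add (T : X ≃ₜ X) (a b : ℤ) (x : X) :
    (T ^ (a + b)) x = (T ^ a) ((T ^ b) x) := by rw [zpow_add]; rfl

theorem zpow_apply_comm (T : X ≃ₜ X) (a b : ℤ) (x : X) :
    (T ^ a) ((T ^ b) x) = (T ^ b) ((T ^ a) x) := by
  rw [← zpow_apply_add, add_comm, zpow_apply_add]

theorem zpow_neg_apply (T : X ≃ₜ X) (k : ℤ) (x : X) :
    (T ^ k) ((T ^ (-k)) x) = x := by
  rw [← zpow_apply_add, add_neg_cancel]; rfl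

theorem nDot_v0' (n : Fin d → ℤ) : nDot n (v0 d) = 0 := by
  unfold nDot v0; simp

theorem nDot_add' (m n : Fin d → ℤ) (ε : Fin d → Bool) :
    nDot (fun j => m j + n j) ε = nDot m ε + nDot n ε := by
  unfold nDot
  rw [← Finset.sum_add_distrib]
  refine Finset.sum_congr rfl fun j _ => ?_
  split <;> simp

theorem nDot_single_add (n₀ : Fin d → ℤ) (k : ℤ) (js : Fin d) (ε : Fin d → Bool) :
    nDot (fun j => n₀ j + (if j = js then k else 0)) ε
      = nDot n₀ ε + (if ε js then k else 0) := by
  rw [nDot_add']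
  congr 1
  unfold nDot
  rw [Finset.sum_eq_single js]
  · split <;> simp
  · intro j _ hj
    simp [hj]
  · simp

theorem exists_true_of_ne_v0 {ε : Fin d → Bool} (h : ε ≠ v0 d) : ∃ j, ε j = true := by
  by_contra hc
  push_neg at hc
  exact h (funext fun j => by simpa [v0] using hc j)

end Aux
section Aux2

set_option linter.unusedSectionVars false

variable {X : Type*} [MetricSpace X] [CompactSpace X] {d : ℕ}

/-- coefficient vector for the constrained action -/
def cvec (εs : Fin d → Bool) (js : Fin d) (ε : Fin d → Bool) : Fin d → ℤ :=
  fun j => (if ε j then 1 else 0) - (if ε js then 1 else 0) * (if εs j then 1 else 0)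

/-- the adjusted exponent vector, satisfying `nDot (adjv m εs js) εs = 0` -/
def adjv (m : Fin d → ℤ) (εs : Fin d → Bool) (js : Fin d) : Fin d → ℤ :=
  fun j => m j - nDot m εs * (if j = js then 1 else 0)

theorem sum_cvec (εs : Fin d → Bool) (js : Fin d) (ε : Fin d → Bool) (m : Fin d → ℤ) :
    ∑ j, cvec εs js ε j * m j = nDot m ε - (if ε js then 1 else 0) * nDot m εs := by
  unfold cvec nDot
  rw [Finset.sum_congr rfl (fun j _ => sub_mul _ _ _), Finset.sum_sub_distrib]
  congr 1
  · exact Finset.sum_congr rfl fun j _ => by split <;> simp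
  · rw [Finset.mul_sum]
    exact Finset.sum_congr rfl fun j _ => by split <;> ring_nf <;> simp

theorem nDot_adjv (m : Fin d → ℤ) (εs : Fin d → Bool) (js : Fin d) (ε : Fin d → Bool) :
    nDot (adjv m εs js) ε = nDot m ε - (if ε js then 1 else 0) * nDot m εs := by
  unfold adjv nDot
  rw [Finset.sum_congr rfl (fun j _ => show (if ε j then m j - (∑ i, if εs i then m i else 0) * (if j = js then 1 else 0) else 0)
        = (if ε j then m j else 0) - (if ε j then (∑ i, if εs i then m i else 0) * (if j = js then 1 else 0) else 0) from by split <;> simp),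
      Finset.sum_sub_distrib]
  congr 1
  rw [Finset.sum_eq_single js]
  · split <;> simp [mul_comm]
  · intro j _ hj; simp [hj]
  · simp

theorem nDot_adjv_self (m : Fin d → ℤ) (εs : Fin d → Bool) (js : Fin d) (hjs : εs js = true) :
    nDot (adjv m εs js) εs = 0 := by
  rw [nDot_adjv, hjs]; simp

theorem sum_cvec_eq_nDot_adjv (εs : Fin d → Bool) (js : Fin d) (ε : Fin d → Bool) (m : Fin d → ℤ) :
    ∑ j, cvec εs js ε j * m j = nDot (adjv m εs js) ε := by
  rw [sum_cvec, nDot_adjv]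

theorem cvec_vals (εs : Fin d → Bool) (js : Fin d) (ε : Fin d → Bool) (j : Fin d) :
    cvec εs js ε j = 1 ∨ cvec εs js ε j = 0 ∨ cvec εs js ε j = -1 := by
  unfold cvec
  rcases h1 : ε j <;> rcases h2 : ε js <;> rcases h3 : εs j <;> simp [h1, h2, h3]

theorem cvec_ne_zero (εs : Fin d → Bool) (js : Fin d) (hjs : εs js = true)
    {ε : Fin d → Bool} (hv : ε ≠ v0 d) (hne : ε ≠ εs) :
    ∃ j, cvec εs js ε j ≠ 0 := by
  by_cases h : ε js = true
  · have : ∃ j, ε j ≠ εs j := by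
      by_contra hc; push_neg at hc; exact hne (funext hc)
    obtain ⟨j, hj⟩ := this
    refine ⟨j, ?_⟩
    unfold cvec
    rcases h1 : ε j <;> rcases h2 : εs j <;> simp [h1, h2, h] at hj ⊢
  · obtain ⟨j, hj⟩ := exists_true_of_ne_v0 hv
    refine ⟨j, ?_⟩
    unfold cvec
    simp only [Bool.not_eq_true] at h
    simp [hj, h]

end Aux2
section Aux3

set_option linter.unusedSectionVars false

variable {X : Type*} [MetricSpace X] [CompactSpace X] {d : ℕ}

theorem pairNE (T : X ≃ₜ X) (hwm : IsWeaklyMixing T) {U V A B : Set X}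
    (hU : IsOpen U) (hUn : U.Nonempty) (hV : IsOpen V) (hVn : V.Nonempty)
    (hA : IsOpen A) (hAn : A.Nonempty) (hB : IsOpen B) (hBn : B.Nonempty) :
    ∃ k : ℤ, (∃ p ∈ U, (T ^ k) p ∈ A) ∧ (∃ q ∈ V, (T ^ k) q ∈ B) := by
  obtain ⟨n, r, hr⟩ := hwm (U ×ˢ V) (A ×ˢ B) (hU.prod hV) (hA.prod hB)
    (hUn.prod hVn) (hAn.prod hBn)
  obtain ⟨⟨hr1, hr2⟩, hr3, hr4⟩ :
      (r.1 ∈ U ∧ r.2 ∈ V) ∧ (T ^ n) r.1 ∈ A ∧ (T ^ n) r.2 ∈ B := by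
    simpa [Set.mem_prod] using hr
  exact ⟨n, ⟨r.1, hr1, hr3⟩, ⟨r.2, hr2, hr4⟩⟩

theorem exists_good_pair (T : X ≃ₜ X) (hwm : IsWeaklyMixing T) (hne : Nonempty X) :
    ∀ l : List (Set X × Set X),
      (∀ pr ∈ l, IsOpen pr.1 ∧ pr.1.Nonempty ∧ IsOpen pr.2 ∧ pr.2.Nonempty) →
      ∃ A B : Set X, IsOpen A ∧ A.Nonempty ∧ IsOpen B ∧ B.Nonempty ∧
        ∀ s : ℤ, (∃ p ∈ A, (T ^ s) p ∈ B) → ∀ pr ∈ l, ∃ p ∈ pr.1, (T ^ s) p ∈ pr.2 := by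
  intro l
  induction l with
  | nil =>
    intro _
    exact ⟨Set.univ, Set.univ, isOpen_univ, Set.univ_nonempty, isOpen_univ, Set.univ_nonempty,
      fun s _ pr hpr => absurd hpr List.not_mem_nil⟩
  | cons hd tl ih =>
    intro hl
    obtain ⟨A, B, hA, hAn, hB, hBn, hgood⟩ := ih fun pr hpr => hl pr (List.mem_cons_of_mem _ hpr)
    obtain ⟨hU, hUn, hV, hVn⟩ := hl hd List.mem_cons_self
    obtain ⟨k, ⟨p, hp1, hp2⟩, ⟨q, hq1, hq2⟩⟩ := pairNE T hwm hU hUn hV hVn hA hAn hB hBn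
    refine ⟨hd.1 ∩ (T ^ k) ⁻¹' A, hd.2 ∩ (T ^ k) ⁻¹' B,
      hU.inter (hA.preimage (T ^ k).continuous), ⟨p, hp1, hp2⟩,
      hV.inter (hB.preimage (T ^ k).continuous), ⟨q, hq1, hq2⟩, ?_⟩
    intro s ⟨r, ⟨hr1, hr2⟩, hr3⟩ pr hpr
    rcases List.mem_cons.mp hpr with h | h
    · subst h
      exact ⟨r, hr1, hr3.1⟩
    · refine hgood s ⟨(T ^ k) r, hr2, ?_⟩ pr h
      rw [← zpow_apply_comm]
      exact hr3.2
  
theorem inter_ne (T : X ≃ₜ X) (hwm : IsWeaklyMixing T) (hne : Nonempty X)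
    (l : List (Set X × Set X))
    (hl : ∀ pr ∈ l, IsOpen pr.1 ∧ pr.1.Nonempty ∧ IsOpen pr.2 ∧ pr.2.Nonempty) :
    ∃ s : ℤ, ∀ pr ∈ l, ∃ p ∈ pr.1, (T ^ s) p ∈ pr.2 := by
  obtain ⟨A, B, hA, hAn, hB, hBn, hgood⟩ := exists_good_pair T hwm hne l hl
  obtain ⟨k, h1, _⟩ := pairNE T hwm hA hAn hA hAn hB hBn hB hBn
  exact ⟨k, hgood k h1⟩

end Aux3
section Aux4

set_option linter.unusedSectionVars false
set_option maxHeartbeats 1000000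

variable {X : Type*} [MetricSpace X] [CompactSpace X]

theorem greedy (T : X ≃ₜ X) (hwm : IsWeaklyMixing T) (hne : Nonempty X) :
    ∀ (D : ℕ) (l : List ((Fin D → ℤ) × Set X × Set X)),
      (∀ t ∈ l, (∀ j, t.1 j = 1 ∨ t.1 j = 0 ∨ t.1 j = -1) ∧ (∃ j, t.1 j ≠ 0) ∧
        IsOpen t.2.1 ∧ t.2.1.Nonempty ∧ IsOpen t.2.2 ∧ t.2.2.Nonempty) →
      ∃ m : Fin D → ℤ, ∀ t ∈ l, ∃ p ∈ t.2.1, (T ^ (∑ j, t.1 j * m j)) p ∈ t.2.2 := by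
  intro D
  induction D with
  | zero =>
    intro l hl
    refine ⟨fun j => 0, fun t ht => ?_⟩
    obtain ⟨j, _⟩ := (hl t ht).2.1
    exact j.elim0
  | succ D ih =>
    intro l hl
    classical
    -- split
    set l₀ : List ((Fin D → ℤ) × Set X × Set X) :=
      (l.filter (fun t => t.1 (Fin.last D) = 0)).map
        (fun t => (t.1 ∘ Fin.castSucc, t.2)) with hl₀def
    have hl₀ : ∀ t ∈ l₀, (∀ j, t.1 j = 1 ∨ t.1 j = 0 ∨ t.1 j = -1) ∧ (∃ j, t.1 j ≠ 0) ∧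
        IsOpen t.2.1 ∧ t.2.1.Nonempty ∧ IsOpen t.2.2 ∧ t.2.2.Nonempty := by
      intro t ht
      obtain ⟨t', ht'mem, rfl⟩ := List.mem_map.mp ht
      have ht'l : t' ∈ l := (List.mem_filter.mp ht'mem).1
      have hlast : t'.1 (Fin.last D) = 0 := by
        have := (List.mem_filter.mp ht'mem).2
        simpa using this
      obtain ⟨hvals, ⟨j, hj⟩, h3, h4, h5, h6⟩ := hl t' ht'l
      refine ⟨fun j' => hvals (Fin.castSucc j'), ?_, h3, h4, h5, h6⟩
      have hjne : j ≠ Fin.last D := by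
        intro h; exact hj (h ▸ hlast)
      obtain ⟨j', rfl⟩ := Fin.exists_castSucc_eq.mpr hjne
      exact ⟨j', hj⟩
    obtain ⟨m', hm'⟩ := ih l₀ hl₀
    -- now the constraints on the last variable
    set b : ((Fin (D+1) → ℤ) × Set X × Set X) → ℤ :=
      fun t => ∑ j : Fin D, t.1 (Fin.castSucc j) * m' j with hbdef
    set l₁ : List (Set X × Set X) :=
      (l.filter (fun t => ¬ (t.1 (Fin.last D) = 0))).map
        (fun t => if t.1 (Fin.last D) = 1 then ((T ^ (b t)) '' t.2.1, t.2.2)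
          else (t.2.2, (T ^ (b t)) '' t.2.1)) with hl₁def
    have hl₁ : ∀ pr ∈ l₁, IsOpen pr.1 ∧ pr.1.Nonempty ∧ IsOpen pr.2 ∧ pr.2.Nonempty := by
      intro pr hpr
      obtain ⟨t, htmem, rfl⟩ := List.mem_map.mp hpr
      have htl : t ∈ l := (List.mem_filter.mp htmem).1
      obtain ⟨_, _, h3, h4, h5, h6⟩ := hl t htl
      have himo : IsOpen ((T ^ (b t)) '' t.2.1) := (T ^ (b t)).isOpenMap _ h3
      have himn : ((T ^ (b t)) '' t.2.1).Nonempty := h4.image _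
      split <;> exact ⟨by assumption, by assumption, by assumption, by assumption⟩
    obtain ⟨s, hs⟩ := inter_ne T hwm hne l₁ hl₁
    refine ⟨(Fin.snoc m' s : Fin (D+1) → ℤ), fun t ht => ?_⟩
    have hsum : (∑ j, t.1 j * (Fin.snoc m' s : Fin (D+1) → ℤ) j) = b t + t.1 (Fin.last D) * s := by
      simp [Fin.sum_univ_castSucc]
      rfl
    by_cases hlast : t.1 (Fin.last D) = 0
    · -- use hm'
      have htmem : (t.1 ∘ Fin.castSucc, t.2) ∈ l₀ := by
        rw [hl₀def]
        exact List.mem_map.mpr ⟨t, List.mem_filter.mpr ⟨ht, by simpa using hlast⟩, rfl⟩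
      obtain ⟨p, hp1, hp2⟩ := hm' _ htmem
      refine ⟨p, hp1, ?_⟩
      rw [hsum, hlast]
      simpa [hbdef] using hp2
    · have hfil : t ∈ l.filter (fun t => ¬ (t.1 (Fin.last D) = 0)) :=
        List.mem_filter.mpr ⟨ht, by simpa using hlast⟩
      have hval : t.1 (Fin.last D) = 1 ∨ t.1 (Fin.last D) = -1 := by
        rcases (hl t ht).1 (Fin.last D) with h | h | h
        · exact Or.inl h
        · exact absurd h hlast
        · exact Or.inr h
      rcases hval with hval | hval
      · have htmem : ((T ^ (b t)) '' t.2.1, t.2.2) ∈ l₁ := by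
          rw [hl₁def]
          exact List.mem_map.mpr ⟨t, hfil, by rw [if_pos hval]⟩
        obtain ⟨q, ⟨p, hp1, rfl⟩, hq2⟩ := hs _ htmem
        refine ⟨p, hp1, ?_⟩
        have hexp : (∑ j, t.1 j * (Fin.snoc m' s : Fin (D+1) → ℤ) j) = s + b t := by
          rw [hsum, hval]; ring
        rw [hexp, zpow_apply_add]
        exact hq2
      · have htmem : (t.2.2, (T ^ (b t)) '' t.2.1) ∈ l₁ := by
          rw [hl₁def]
          exact List.mem_map.mpr ⟨t, hfil, by rw [if_neg (by rw [hval]; norm_num)]⟩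
        obtain ⟨v, hv1, hv2⟩ := hs _ htmem
        obtain ⟨p, hp1, hpv⟩ := hv2
        refine ⟨p, hp1, ?_⟩
        have hexp : (∑ j, t.1 j * (Fin.snoc m' s : Fin (D+1) → ℤ) j) = (-s) + b t := by
          rw [hsum, hval]; ring
        rw [hexp, zpow_apply_add, hpv, ← zpow_apply_add, neg_add_cancel]
        exact hv1

end Aux4
section Aux5

set_option linter.unusedSectionVars false

variable {X : Type*} [MetricSpace X] [CompactSpace X] {d : ℕ}

/-- `piCongrRight` as a monoid hom. -/
def pcr : ((Fin d → Bool) → (X ≃ₜ X)) →* (((Fin d → Bool) → X) ≃ₜ ((Fin d → Bool) → X)) where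
  toFun f := Homeomorph.piCongrRight f
  map_one' := by
    apply Homeomorph.ext
    intro z
    rfl
  map_mul' f g := by
    apply Homeomorph.ext
    intro z
    rfl

theorem pcr_apply (f : (Fin d → Bool) → (X ≃ₜ X)) (z : (Fin d → Bool) → X) (ε : Fin d → Bool) :
    pcr f z ε = f ε (z ε) := rfl

/-- the cube homeomorphism attached to `n : ℤ^d`. -/
def Hmap (T : X ≃ₜ X) (n : Fin d → ℤ) :
    ((Fin d → Bool) → X) ≃ₜ ((Fin d → Bool) → X) :=
  pcr (fun ε => T ^ nDot n ε)

theorem Hmap_apply (T : X ≃ₜ X) (n : Fin d → ℤ) (z : (Fin d → Bool) → X) (ε : Fin d → Bool) :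
    Hmap T n z ε = (T ^ nDot n ε) (z ε) := rfl

theorem faceHomeo_eq_pcr (T : X ≃ₜ X) (j : Fin d) :
    faceHomeo T j = pcr (fun ε => if ε j then T else 1) := rfl

theorem Hmap_mem_faceGroup (T : X ≃ₜ X) (n : Fin d → ℤ) :
    Hmap T n ∈ faceGroup T d := by
  classical
  have key : ∀ s : Finset (Fin d),
      pcr (fun ε => T ^ (∑ j ∈ s, if ε j then n j else 0)) ∈ faceGroup T d := by
    intro s
    induction s using Finset.induction_on with
    | empty =>
      have : (fun ε : Fin d → Bool => T ^ (∑ j ∈ (∅ : Finset (Fin d)), if ε j then n j else 0))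
          = (1 : (Fin d → Bool) → (X ≃ₜ X)) := by
        funext ε; simp
      rw [this, map_one]
      exact Subgroup.one_mem _
    | @insert a s' hj ih =>
      have : (fun ε : Fin d → Bool => T ^ (∑ j ∈ insert a s', if ε j then n j else 0))
          = (fun ε => if ε a then T else 1) ^ (n a) * (fun ε => T ^ (∑ j ∈ s', if ε j then n j else 0)) := by
        funext ε
        rw [Finset.sum_insert hj]
        show T ^ _ = ((if ε a then T else 1) ^ (n a)) * _
        rw [zpow_add]
        congr 1
        split <;> simp
      rw [this, map_mul, map_zpow]
      exact Subgroup.mul_mem _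
        (Subgroup.zpow_mem _ (Subgroup.subset_closure (Set.mem_range.mpr ⟨a, (faceHomeo_eq_pcr T a).symm⟩)) _) ih
  exact key Finset.univ

theorem Hmap_add (T : X ≃ₜ X) (m n : Fin d → ℤ) :
    Hmap T (fun j => m j + n j) = Hmap T m * Hmap T n := by
  apply Homeomorph.ext
  intro z
  funext ε
  show (T ^ nDot (fun j => m j + n j) ε) (z ε) = (Hmap T m) ((Hmap T n) z) ε
  rw [nDot_add', zpow_apply_add]
  rfl

theorem Hmap_zero (T : X ≃ₜ X) : Hmap T (fun _ : Fin d => (0 : ℤ)) = 1 := by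
  apply Homeomorph.ext
  intro z
  funext ε
  show (T ^ nDot (fun _ => (0:ℤ)) ε) (z ε) = z ε
  have : nDot (fun _ : Fin d => (0:ℤ)) ε = 0 := by unfold nDot; simp
  rw [this, zpow_zero]
  rfl

/-- the range of `Hmap` as a subgroup -/
def HmapRange (T : X ≃ₜ X) (d : ℕ) :
    Subgroup (((Fin d → Bool) → X) ≃ₜ ((Fin d → Bool) → X)) where
  carrier := {g | ∃ n : Fin d → ℤ, g = Hmap T n}
  one_mem' := ⟨fun _ => 0, (Hmap_zero T).symm⟩
  mul_mem' := by
    rintro a b ⟨m, rfl⟩ ⟨n, rfl⟩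
    exact ⟨fun j => m j + n j, (Hmap_add T m n).symm⟩
  inv_mem' := by
    rintro a ⟨m, rfl⟩
    refine ⟨fun j => -(m j), ?_⟩
    have h1 : Hmap T m * Hmap T (fun j => -(m j)) = 1 := by
      rw [← Hmap_add]
      have : (fun j => m j + -(m j)) = (fun _ : Fin d => (0:ℤ)) := by funext j; ring
      rw [this, Hmap_zero]
    exact (eq_inv_of_mul_eq_one_right h1).symm ▸ (inv_eq_of_mul_eq_one_right h1).symm

theorem faceGroup_eq_Hmap (T : X ≃ₜ X) {g : ((Fin d → Bool) → X) ≃ₜ ((Fin d → Bool) → X)}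
    (hg : g ∈ faceGroup T d) : ∃ n : Fin d → ℤ, g = Hmap T n := by
  have hle : faceGroup T d ≤ HmapRange T d := by
    apply Subgroup.closure_le _ |>.mpr
    rintro g ⟨j, rfl⟩
    refine ⟨fun j' => if j' = j then 1 else 0, ?_⟩
    apply Homeomorph.ext
    intro z
    funext ε
    show faceHomeo T j z ε = (T ^ nDot (fun j' => if j' = j then 1 else 0) ε) (z ε)
    have hdot : nDot (fun j' => if j' = j then (1:ℤ) else 0) ε = if ε j then 1 else 0 := by
      unfold nDot
      rw [Finset.sum_eq_single j]
      · split <;> simp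
      · intro j' _ hj'; simp [hj']
      · simp
    rw [hdot]
    show (if ε j then T else Homeomorph.refl X) (z ε) = _
    cases h : ε j with
    | false => rw [if_neg (by simp [h]), if_neg (by simp [h]), zpow_zero]; rfl
    | true => rw [if_pos (by simp [h]), if_pos (by simp [h]), zpow_one]
  exact hle hg

end Aux5
section Aux6

set_option linter.unusedSectionVars false
set_option maxHeartbeats 1000000

variable {X : Type*} [MetricSpace X] [CompactSpace X] {d : ℕ}

theorem exists_trans_point (T : X ≃ₜ X) (hwm : IsWeaklyMixing T) (hne : Nonempty X)
    (E' : Finset (Fin d → Bool)) (εs : Fin d → Bool) (js : Fin d)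
    (hjs : εs js = true) (hv0 : ∀ ε ∈ E', ε ≠ v0 d) (hεs : εs ∉ E') :
    ∃ ω : (Fin d → Bool) → X, ∀ (w : (Fin d → Bool) → X) (δ : ℝ), 0 < δ →
      ∃ n : Fin d → ℤ, nDot n εs = 0 ∧
        ∀ ε ∈ E', dist ((T ^ nDot n ε) (ω ε)) (w ε) < δ := by
  classical
  haveI := hne
  obtain ⟨Ds, hDc, hDd⟩ : ∃ s : Set ((Fin d → Bool) → X), s.Countable ∧ Dense s := by
    obtain ⟨c, hc, hsub⟩ := (isCompact_univ (X := (Fin d → Bool) → X)).isSeparable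
    refine ⟨c, hc, ?_⟩
    rw [dense_iff_closure_eq]
    exact Set.eq_univ_of_univ_subset hsub
  haveI : Countable ↥Ds := hDc.to_subtype
  -- the family of open sets
  set G : ↥Ds × ℕ → Set ((Fin d → Bool) → X) := fun p =>
    ⋃ n : {n : Fin d → ℤ // nDot n εs = 0},
      ⋂ ε ∈ (E' : Set (Fin d → Bool)),
        {ω | dist ((T ^ nDot n.1 ε) (ω ε)) ((p.1 : (Fin d → Bool) → X) ε) < 1/(p.2+1)}
    with hGdef
  have hGopen : ∀ p, IsOpen (G p) := by
    intro p
    apply isOpen_iUnion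
    intro n
    apply E'.finite_toSet.isOpen_biInter
    intro ε _
    exact isOpen_lt (Continuous.dist ((T ^ nDot n.1 ε).continuous.comp (continuous_apply ε))
      continuous_const) continuous_const
  have hGdense : ∀ p, Dense (G p) := by
    intro p
    rw [Metric.dense_iff]
    intro ω' r hr
    have hrk : (0:ℝ) < 1/(p.2+1) := by positivity
    -- build the list for greedy
    set lst : List ((Fin d → ℤ) × Set X × Set X) := E'.toList.map
      (fun ε => (cvec εs js ε, Metric.ball (ω' ε) (r/2),
        Metric.ball ((p.1 : (Fin d → Bool) → X) ε) (1/(p.2+1)))) with hlstdef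
    have hlst : ∀ t ∈ lst, (∀ j, t.1 j = 1 ∨ t.1 j = 0 ∨ t.1 j = -1) ∧ (∃ j, t.1 j ≠ 0) ∧
        IsOpen t.2.1 ∧ t.2.1.Nonempty ∧ IsOpen t.2.2 ∧ t.2.2.Nonempty := by
      intro t ht
      obtain ⟨ε, hεmem, rfl⟩ := List.mem_map.mp ht
      have hεE' : ε ∈ E' := Finset.mem_toList.mp hεmem
      exact ⟨cvec_vals εs js ε, cvec_ne_zero εs js hjs (hv0 ε hεE') (fun h => hεs (h ▸ hεE')),
        Metric.isOpen_ball, Metric.nonempty_ball.mpr (by linarith),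
        Metric.isOpen_ball, Metric.nonempty_ball.mpr hrk⟩
    obtain ⟨m, hm⟩ := greedy T hwm hne d lst hlst
    have hpts : ∀ ε, ∃ q : X, ε ∈ E' →
        (q ∈ Metric.ball (ω' ε) (r/2) ∧
          (T ^ nDot (adjv m εs js) ε) q ∈ Metric.ball ((p.1 : (Fin d → Bool) → X) ε) (1/(p.2+1))) := by
      intro ε
      by_cases hε : ε ∈ E'
      · obtain ⟨q, hq1, hq2⟩ := hm _ (List.mem_map.mpr ⟨ε, Finset.mem_toList.mpr hε, rfl⟩)
        refine ⟨q, fun _ => ⟨hq1, ?_⟩⟩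
        rwa [← sum_cvec_eq_nDot_adjv]
      · exact ⟨ω' ε, fun h => absurd h hε⟩
    choose q hq using hpts
    set ω : (Fin d → Bool) → X := fun ε => if ε ∈ E' then q ε else ω' ε with hωdef
    refine ⟨ω, ?_, ?_⟩
    · rw [Metric.mem_ball]
      rw [dist_pi_lt_iff hr]
      intro ε
      by_cases hε : ε ∈ E'
      · have := (hq ε hε).1
        rw [Metric.mem_ball] at this
        simp only [hωdef]
        rw [if_pos hε]
        linarith
      · simp only [hωdef]
        rw [if_neg hε]
        simpa using hr
    · apply Set.mem_iUnion.mpr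
      refine ⟨⟨adjv m εs js, nDot_adjv_self m εs js hjs⟩, ?_⟩
      apply Set.mem_iInter₂.mpr
      intro ε hε
      have hxx := (hq ε (Finset.mem_coe.mp hε)).2
      rw [Metric.mem_ball] at hxx
      simp only [Set.mem_setOf_eq, hωdef]
      rw [if_pos (Finset.mem_coe.mp hε)]
      exact hxx
  -- Baire
  have hdense : Dense (⋂ p, G p) := dense_iInter_of_isOpen hGopen hGdense
  obtain ⟨ω₀, hω₀⟩ := hdense.nonempty
  refine ⟨ω₀, ?_⟩
  intro w δ hδ
  obtain ⟨w', hw'ball, hw'Ds⟩ : ∃ w' , w' ∈ Metric.ball w (δ/2) ∧ w' ∈ Ds := by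
    obtain ⟨w', hw'⟩ := Metric.dense_iff.mp hDd w (δ/2) (by linarith)
    exact ⟨w', hw'.1, hw'.2⟩
  obtain ⟨k, hk⟩ := exists_nat_one_div_lt (show (0:ℝ) < δ/2 by linarith)
  have hmem := Set.mem_iInter.mp hω₀ (⟨⟨w', hw'Ds⟩, k⟩ : ↥Ds × ℕ)
  obtain ⟨n, hn⟩ := Set.mem_iUnion.mp hmem
  refine ⟨n.1, n.2, ?_⟩
  intro ε hε
  have h1 := Set.mem_iInter₂.mp hn ε hε
  simp only [Set.mem_setOf_eq] at h1
  have h2 : dist (w' ε) (w ε) < δ/2 := by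
    calc dist (w' ε) (w ε) ≤ dist w' w := dist_le_pi_dist w' w ε
    _ < δ/2 := Metric.mem_ball.mp hw'ball
  calc dist ((T ^ nDot n.1 ε) (ω₀ ε)) (w ε)
      ≤ dist ((T ^ nDot n.1 ε) (ω₀ ε)) (w' ε) + dist (w' ε) (w ε) := dist_triangle _ _ _
    _ < 1/(k+1) + δ/2 := by
        apply add_lt_add _ h2
        exact h1
    _ < δ/2 + δ/2 := by linarith [hk]
    _ = δ := by ring
end Aux6
section Aux7

set_option linter.unusedSectionVars false
set_option maxHeartbeats 2000000

variable {X : Type*} [MetricSpace X] [CompactSpace X] {d : ℕ}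

theorem cube_min (T : X ≃ₜ X) (hmin : IsMinimalTDS T) (hwm : IsWeaklyMixing T)
    (hne : Nonempty X) (E : Finset (Fin d → Bool)) :
    (∀ ε ∈ E, ε ≠ v0 d) → ∀ (z w : (Fin d → Bool) → X) (δ : ℝ), 0 < δ →
      ∃ n : Fin d → ℤ, ∀ ε ∈ E, dist ((T ^ nDot n ε) (z ε)) (w ε) < δ := by
  classical
  induction E using Finset.induction_on with
  | empty =>
    intro _ z w δ hδ
    exact ⟨fun _ => 0, fun ε hε => absurd hε (Finset.notMem_empty ε)⟩
  | @insert εs E' hεs ih =>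
    intro hE z w δ hδ
    have hεsv0 : εs ≠ v0 d := hE εs (Finset.mem_insert_self _ _)
    obtain ⟨js, hjs⟩ := exists_true_of_ne_v0 hεsv0
    have hE' : ∀ ε ∈ E', ε ≠ v0 d := fun ε hε => hE ε (Finset.mem_insert_of_mem hε)
    obtain ⟨ω₀, hω₀⟩ := exists_trans_point T hwm hne E' εs js hjs hE' hεs
    have seq : ∀ k : ℕ, ∃ n : Fin d → ℤ,
        ∀ ε ∈ E', dist ((T ^ nDot n ε) (z ε)) (ω₀ ε) < 1/(k+1) :=
      fun k => ih hE' z ω₀ (1/(k+1)) (by positivity)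
    choose ns hns using seq
    set y : ℕ → (Fin d → Bool) → X := fun k ε => (T ^ nDot (ns k) ε) (z ε) with hydef
    obtain ⟨L, -, φ, hφ, hLtend⟩ := IsCompact.tendsto_subseq
      (isCompact_univ (X := (Fin d → Bool) → X)) (fun k => Set.mem_univ (y k))
    have hcoord : ∀ ε, Filter.Tendsto (fun i => y (φ i) ε) Filter.atTop (nhds (L ε)) :=
      fun ε => (tendsto_pi_nhds.mp hLtend) ε
    have hLω : ∀ ε ∈ E', L ε = ω₀ ε := by
      intro ε hε
      refine tendsto_nhds_unique (hcoord ε) ?_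
      rw [Metric.tendsto_atTop]
      intro η hη
      obtain ⟨N, hN⟩ := exists_nat_one_div_lt hη
      refine ⟨N, fun i hi => ?_⟩
      have hb : dist (y (φ i) ε) (ω₀ ε) < 1/(φ i + 1) := hns (φ i) ε hε
      have h1 : (1:ℝ)/(φ i + 1) ≤ 1/(N + 1) := by
        apply one_div_le_one_div_of_le (by positivity)
        have h2 : N ≤ φ i := le_trans hi hφ.le_apply
        have := (Nat.cast_le (α := ℝ)).mpr h2
        linarith
      calc dist (y (φ i) ε) (ω₀ ε) < 1/(φ i + 1) := hb
        _ ≤ 1/(N+1) := h1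
        _ < η := hN
    set c : X := L εs with hcdef
    have spread : ∀ (w' : (Fin d → Bool) → X) (δ' : ℝ), 0 < δ' →
        ∃ n : Fin d → ℤ, (∀ ε ∈ E', dist ((T ^ nDot n ε) (z ε)) (w' ε) < δ') ∧
          dist ((T ^ nDot n εs) (z εs)) c < δ' := by
      intro w' δ' hδ'
      obtain ⟨m, hm0, hmE⟩ := hω₀ w' (δ'/2) (by linarith)
      have hA : ∀ᶠ i in Filter.atTop, ∀ ε ∈ E',
          dist ((T ^ nDot m ε) (y (φ i) ε)) ((T ^ nDot m ε) (ω₀ ε)) < δ'/2 := by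
        rw [Filter.eventually_all_finset]
        intro ε hε
        have htd := ((T ^ nDot m ε).continuous.tendsto (L ε)).comp (hcoord ε)
        rw [hLω ε hε] at htd
        exact (Metric.tendsto_nhds.mp htd) (δ'/2) (by linarith)
      have hB : ∀ᶠ i in Filter.atTop, dist (y (φ i) εs) c < δ' :=
        (Metric.tendsto_nhds.mp (hcoord εs)) δ' hδ'
      obtain ⟨i, hiA, hiB⟩ := (hA.and hB).exists
      refine ⟨fun j => m j + ns (φ i) j, ?_, ?_⟩
      · intro ε hε
        have heq : (T ^ nDot (fun j => m j + ns (φ i) j) ε) (z ε)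
            = (T ^ nDot m ε) (y (φ i) ε) := by
          rw [nDot_add', zpow_apply_add]
        rw [heq]
        calc dist ((T ^ nDot m ε) (y (φ i) ε)) (w' ε)
            ≤ dist ((T ^ nDot m ε) (y (φ i) ε)) ((T ^ nDot m ε) (ω₀ ε))
              + dist ((T ^ nDot m ε) (ω₀ ε)) (w' ε) := dist_triangle _ _ _
          _ < δ'/2 + δ'/2 := add_lt_add (hiA ε hε) (hmE ε hε)
          _ = δ' := by ring
      · have heq : (T ^ nDot (fun j => m j + ns (φ i) j) εs) (z εs) = y (φ i) εs := by
          rw [nDot_add', hm0, zero_add]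
        rw [heq]
        exact hiB
    -- final assembly
    obtain ⟨b, ⟨k, rfl⟩, hkdist⟩ :=
      Metric.mem_closure_iff.mp (hmin c (w εs)) (δ/2) (by linarith)
    obtain ⟨η, hη, hηimp⟩ := Metric.uniformContinuous_iff.mp
      (CompactSpace.uniformContinuous_of_continuous (T ^ k).continuous) (δ/2) (by linarith)
    set δ₀ : ℝ := min η (δ/2) with hδ₀def
    have hδ₀pos : 0 < δ₀ := lt_min hη (by linarith)
    set w0 : (Fin d → Bool) → X := fun ε => if ε js then (T ^ (-k)) (w ε) else w ε with hw0def
    obtain ⟨n₀, hn₀E, hn₀εs⟩ := spread w0 δ₀ hδ₀pos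
    refine ⟨fun j => n₀ j + (if j = js then k else 0), ?_⟩
    intro ε hε
    rcases Finset.mem_insert.mp hε with rfl | hεE'
    · have hdot : nDot (fun j => n₀ j + (if j = js then k else 0)) ε
          = k + nDot n₀ ε := by
        rw [nDot_single_add, if_pos hjs]; ring
      rw [hdot, zpow_apply_add]
      have h1 : dist ((T ^ k) ((T ^ nDot n₀ ε) (z ε))) ((T ^ k) c) < δ/2 :=
        hηimp (lt_of_lt_of_le hn₀εs (min_le_left _ _))
      calc dist ((T ^ k) ((T ^ nDot n₀ ε) (z ε))) (w ε)
          ≤ dist ((T ^ k) ((T ^ nDot n₀ ε) (z ε))) ((T ^ k) c)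
            + dist ((T ^ k) c) (w ε) := dist_triangle _ _ _
        _ < δ/2 + δ/2 := add_lt_add h1 (by rw [dist_comm]; exact hkdist)
        _ = δ := by ring
    · by_cases hj : ε js = true
      · have hdot : nDot (fun j => n₀ j + (if j = js then k else 0)) ε
            = k + nDot n₀ ε := by
          rw [nDot_single_add, if_pos hj]; ring
        rw [hdot, zpow_apply_add]
        have hw0 : w0 ε = (T ^ (-k)) (w ε) := by
          simp only [hw0def]; rw [if_pos hj]
        have h1 : dist ((T ^ nDot n₀ ε) (z ε)) ((T ^ (-k)) (w ε)) < η := by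
          have := hn₀E ε hεE'
          rw [hw0] at this
          exact lt_of_lt_of_le this (min_le_left _ _)
        have h2 := hηimp h1
        rw [zpow_neg_apply] at h2
        linarith
      · have hdot : nDot (fun j => n₀ j + (if j = js then k else 0)) ε
            = nDot n₀ ε := by
          rw [nDot_single_add, if_neg (by simp [hj])]; ring
        rw [hdot]
        have hw0 : w0 ε = w ε := by
          simp only [hw0def]; rw [if_neg (by simp [hj])]
        have := hn₀E ε hεE'
        rw [hw0] at this
        have hle : δ₀ ≤ δ/2 := min_le_right _ _
        linarith

end Aux7
section Aux8

set_option linter.unusedSectionVars false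
set_option maxHeartbeats 1000000

variable {X : Type*} [MetricSpace X] [CompactSpace X] {d : ℕ}

theorem orbit_eq (T : X ≃ₜ X) (z : (Fin d → Bool) → X) :
    groupOrbit (faceGroup T d) z = Set.range (fun n : Fin d → ℤ => Hmap T n z) := by
  ext y
  constructor
  · rintro ⟨g, hg, rfl⟩
    obtain ⟨n, rfl⟩ := faceGroup_eq_Hmap T hg
    exact ⟨n, rfl⟩
  · rintro ⟨n, rfl⟩
    exact ⟨Hmap T n, Hmap_mem_faceGroup T n, rfl⟩

theorem orbit_closure_eq (T : X ≃ₜ X) (hmin : IsMinimalTDS T) (hwm : IsWeaklyMixing T)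
    (x : X) (z : (Fin d → Bool) → X) (hz : z (v0 d) = x) :
    closure (groupOrbit (faceGroup T d) z) = {z' : (Fin d → Bool) → X | z' (v0 d) = x} := by
  classical
  have hne : Nonempty X := ⟨x⟩
  rw [orbit_eq]
  apply Set.Subset.antisymm
  · apply closure_minimal
    · rintro y ⟨n, rfl⟩
      show Hmap T n z (v0 d) = x
      rw [Hmap_apply, nDot_v0', zpow_zero, ← hz]
      rfl
    · exact isClosed_eq (continuous_apply (v0 d)) continuous_const
  · intro z' hz'
    rw [Metric.mem_closure_iff]
    intro δ hδ
    obtain ⟨n, hn⟩ := cube_min T hmin hwm hne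
      (Finset.univ.filter (fun ε => ε ≠ v0 d))
      (fun ε hε => (Finset.mem_filter.mp hε).2) z z' δ hδ
    refine ⟨Hmap T n z, ⟨n, rfl⟩, ?_⟩
    rw [dist_pi_lt_iff hδ]
    intro ε
    by_cases hε : ε = v0 d
    · subst hε
      have h1 : Hmap T n z (v0 d) = x := by
        rw [Hmap_apply, nDot_v0', zpow_zero, ← hz]; rfl
      rw [h1, hz']
      simpa using hδ
    · have h2 := hn ε (Finset.mem_filter.mpr ⟨Finset.mem_univ ε, hε⟩)
      rw [dist_comm] at h2
      exact h2

end Aux8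
/-- for a minimal weakly mixing system, for every `x ∈ X` the closure of the
`F^{[d]}`-orbit of `x^{[d]}` is `{x} × X_*^{[d]}`, and this set is a minimal closed
`F^{[d]}`-invariant set (the `F^{[d]}`-orbit of each of its points is dense in it). -/
theorem statement16 {X : Type*} [MetricSpace X] [CompactSpace X]
    (T : X ≃ₜ X) (hmin : IsMinimalTDS T) (hwm : IsWeaklyMixing T)
    (d : ℕ) (hd : 1 ≤ d) :
    ∀ x : X,
      (closure (groupOrbit (faceGroup T d) (fun _ => x))
        = {z : (Fin d → Bool) → X | z (v0 d) = x}) ∧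
      ∀ z : (Fin d → Bool) → X, z (v0 d) = x →
        closure (groupOrbit (faceGroup T d) z)
          = {z' : (Fin d → Bool) → X | z' (v0 d) = x} := by
  intro x
  exact ⟨orbit_closure_eq T hmin hwm x (fun _ => x) rfl,
    fun z hz => orbit_closure_eq T hmin hwm x z hz⟩
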